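/- arXiv:1802.03657 — 2 statements merged into one kernel-verified Lean document; each statement's English description precedes it below -/
import Mathlib

section
/- Let ε be a tree-like map with M = {1, …, |M|}. Then the sets X_1, X_2, …, X_{|M|}, X_⊗ form a quasi-partition of X, i.e., they are pairwise disjoint, their union is X, and at most one of them (namely X_⊗) is empty. -/
namespace GenFitch

/-- A rooted tree with leaf set `X`: a finite tree (acyclic connected simple
graph) with a distinguished root and an injective embedding of `X` onto the
set of vertices of degree at most one (the leaves). -/
structure RootedTree (X : Type) where
  V : Type
  fintypeV : Fintype V
  G : SimpleGraph V
  isTree : G.IsTree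
  root : V
  leaf : X → V
  leaf_inj : Function.Injective leaf
  leaf_iff : ∀ v : V, (∃ x : X, leaf x = v) ↔ (G.neighborSet v).ncard ≤ 1

namespace RootedTree

variable {X : Type}

/-- Degree of a vertex. -/
noncomputable def deg (T : RootedTree X) (v : T.V) : ℕ := (T.G.neighborSet v).ncard

/-- `v` is a leaf. -/
def IsLeaf (T : RootedTree X) (v : T.V) : Prop := ∃ x : X, T.leaf x = v

/-- `T` is phylogenetic: the root is an inner vertex of degree at least 2 and
every other inner vertex has degree at least 3. -/
def Phylo (T : RootedTree X) : Prop :=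
  ¬ T.IsLeaf T.root ∧ 2 ≤ T.deg T.root ∧
    ∀ v : T.V, ¬ T.IsLeaf v → v ≠ T.root → 3 ≤ T.deg v

/-- `T` is binary: the root has degree exactly 2 and every other inner vertex
has degree exactly 3. -/
def Binary (T : RootedTree X) : Prop :=
  T.deg T.root = 2 ∧ ∀ v : T.V, ¬ T.IsLeaf v → v ≠ T.root → T.deg v = 3

/-- `u` is an ancestor of `v` (written `u ⪰_T v`): `u` lies on the (unique)
path from the root to `v`. -/
def Anc (T : RootedTree X) (u v : T.V) : Prop :=
  ∀ p : T.G.Walk T.root v, p.IsPath → u ∈ p.support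

/-- `l` is the least common ancestor of the set of vertices `S`. -/
def IsLcaSet (T : RootedTree X) (l : T.V) (S : Set T.V) : Prop :=
  (∀ v ∈ S, T.Anc l v) ∧ ∀ u : T.V, (∀ v ∈ S, T.Anc u v) → T.Anc u l

/-- `T` displays the rooted triple `xy|z`, i.e. `lca(x,y) ≺ lca(x,y,z)`. -/
def Displays (T : RootedTree X) (x y z : X) : Prop :=
  ∃ l₂ l₃ : T.V, T.IsLcaSet l₂ {T.leaf x, T.leaf y} ∧
    T.IsLcaSet l₃ {T.leaf x, T.leaf y, T.leaf z} ∧ T.Anc l₃ l₂ ∧ l₂ ≠ l₃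

end RootedTree

/-- Some edge on the (unique) path from `lca(x,y)` to `y` carries the label
`m`.  Labels are drawn from `Option L`, with `none` playing the role of `⊗`. -/
def PathHasLabel {X L : Type} (T : RootedTree X) (lam : Sym2 T.V → Option L)
    (x y : X) (m : L) : Prop :=
  ∃ l : T.V, T.IsLcaSet l {T.leaf x, T.leaf y} ∧
    ∃ p : T.G.Walk l (T.leaf y), p.IsPath ∧ ∃ e ∈ p.edges, lam e = some m

/-- The edge-labeled tree `(T,lam)` explains the map `eps`:
for all distinct `x y`, `eps x y = some m` iff some edge on the path from
`lca(x,y)` to `y` has label `m`, and `eps x y = none` (i.e. `⊗`) iff no edge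
on that path carries a label in `L`. -/
def Explains {X L : Type} (T : RootedTree X) (lam : Sym2 T.V → Option L)
    (eps : X → X → Option L) : Prop :=
  ∀ x y : X, x ≠ y →
    ((∀ m : L, eps x y = some m ↔ PathHasLabel T lam x y m) ∧
     (eps x y = none ↔ ∀ m : L, ¬ PathHasLabel T lam x y m))

/-- `eps` is tree-like: some edge-labeled phylogenetic tree explains it. -/
def TreeLike {X L : Type} (eps : X → X → Option L) : Prop :=
  ∃ (T : RootedTree X) (lam : Sym2 T.V → Option L), T.Phylo ∧ Explains T lam eps

/-- The set `X_s` for a symbol `s ∈ M ∪ {⊗}` (encoded as `s : Option M`):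
those `x` having an in-arc labeled `s` and all other in-arcs labeled `⊗` or `s`. -/
def Xset {X M : Type} (eps : X → X → Option M) (s : Option M) : Set X :=
  {x : X | ∃ z : X, z ≠ x ∧ eps z x = s ∧
    ∀ z' : X, z' ≠ z → z' ≠ x → (eps z' x = none ∨ eps z' x = s)}

/-- The sets `X_s`, `s ∈ M ∪ {⊗}`, form a quasi-partition of `X`: pairwise
disjoint, union `X`, and at most one of them empty. -/
def QuasiPartition {X M : Type} (eps : X → X → Option M) : Prop :=
  (∀ s t : Option M, s ≠ t → Disjoint (Xset eps s) (Xset eps t)) ∧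
  (⋃ s : Option M, Xset eps s) = Set.univ ∧
  {s : Option M | Xset eps s = ∅}.Subsingleton

/-- A digraph `(Y, A)` is a simple Fitch graph: it is explained by a
`{1,⊗}`-edge-labeled phylogenetic tree on `Y` (a digraph on at most one
vertex is trivially explained by the trivial tree). -/
def IsFitchGraph (Y : Type) (A : Y → Y → Prop) : Prop :=
  Subsingleton Y ∨
  ∃ (T : RootedTree Y) (lam : Sym2 T.V → Option Unit), T.Phylo ∧
    ∀ x y : Y, x ≠ y → (A x y ↔ PathHasLabel T lam x y Unit.unit)

/-- `T'` is obtained from `T` by contracting (the fibers of) `φ`; equivalently,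
`T` refines `T'`. -/
structure IsContractionMap {X : Type} (T T' : RootedTree X) (φ : T.V → T'.V) :
    Prop where
  surj : Function.Surjective φ
  root_map : φ T.root = T'.root
  leaf_map : ∀ x : X, φ (T.leaf x) = T'.leaf x
  adj_map : ∀ a b : T.V, T.G.Adj a b → φ a = φ b ∨ T'.G.Adj (φ a) (φ b)
  adj_lift : ∀ u v : T'.V, T'.G.Adj u v →
    ∃ a b : T.V, T.G.Adj a b ∧ φ a = u ∧ φ b = v
  fiber_conn : ∀ u : T'.V, (T.G.induce {a : T.V | φ a = u}).Connected

/-- `(T,lam)` is a least-resolved tree explaining `eps`: it explains `eps` and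
no tree obtained from `T` by contracting one or more edges admits an
edge-labeling explaining `eps`. -/
def LeastResolved {X M : Type} (eps : X → X → Option M) (T : RootedTree X)
    (lam : Sym2 T.V → Option M) : Prop :=
  T.Phylo ∧ Explains T lam eps ∧
    ∀ (T' : RootedTree X) (φ : T.V → T'.V) (lam' : Sym2 T'.V → Option M),
      IsContractionMap T T' φ → ¬ Function.Injective φ → T'.Phylo →
        ¬ Explains T' lam' eps

/-- The rooted triple `xy|z` is informative for `eps`. -/
def Informative {X M : Type} (eps : X → X → Option M) (x y z : X) : Prop :=
  x ≠ y ∧ x ≠ z ∧ y ≠ z ∧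
  ∃ m : M, eps z x = some m ∧ eps z y = some m ∧ eps x z = eps y z ∧
    (eps x y = none ∨ eps x y = some m) ∧
    (eps y x = none ∨ eps y x = some m) ∧
    (eps x y = none ∨ eps y x = none)

/-- `T'` (a rooted tree on `Y`, with `incl : Y → X` and vertex embedding `ι`)
is the restriction `T|Y` of `T` to the leaf set `Y`: leaves map to leaves,
the ancestor relation is preserved and reflected, the vertices of `T'`
correspond exactly to the least common ancestors of pairs of `Y`-leaves in
`T`, and the root of `T'` corresponds to the least common ancestor of all
`Y`-leaves. -/
structure IsRestriction {X Y : Type} (T : RootedTree X) (incl : Y → X)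
    (T' : RootedTree Y) (ι : T'.V → T.V) : Prop where
  inj : Function.Injective ι
  leaf_map : ∀ y : Y, ι (T'.leaf y) = T.leaf (incl y)
  anc_iff : ∀ a b : T'.V, T'.Anc a b ↔ T.Anc (ι a) (ι b)
  image : ∀ v : T.V, (∃ a : T'.V, ι a = v) ↔
      ∃ y z : Y, T.IsLcaSet v {T.leaf (incl y), T.leaf (incl z)}
  root_map : T.IsLcaSet (ι T'.root) {v : T.V | ∃ y : Y, v = T.leaf (incl y)}

section Aux

open SimpleGraph

variable {V : Type} [DecidableEq V] {G : SimpleGraph V}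

private lemma path_unique' (hac : G.IsAcyclic) {a b : V} (p q : G.Walk a b)
    (hp : p.IsPath) (hq : q.IsPath) : p = q :=
  congrArg Subtype.val (hac.path_unique ⟨p, hp⟩ ⟨q, hq⟩)

private lemma drop_comparable (hac : G.IsAcyclic) {a b l l' : V}
    (R : G.Walk a b) (hR : R.IsPath) (hl : l ∈ R.support) (hl' : l' ∈ R.support) :
    l ∈ (R.dropUntil l' hl').support ∨ l' ∈ (R.dropUntil l hl).support := by
  have hsplit : l' ∈ (R.takeUntil l hl).support ∨ l' ∈ (R.dropUntil l hl).support := by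
    rw [← Walk.mem_support_append_iff, Walk.take_spec]
    exact hl'
  rcases hsplit with h | h
  · left
    have htd : ((R.takeUntil l hl).append (R.dropUntil l hl)).IsPath := by
      rw [Walk.take_spec]; exact hR
    have hnodup := (Walk.isPath_def _).1 htd
    rw [Walk.support_append, List.nodup_append] at hnodup
    have hq : (((R.takeUntil l hl).dropUntil l' h).append (R.dropUntil l hl)).IsPath := by
      rw [Walk.isPath_def, Walk.support_append, List.nodup_append]
      refine ⟨(Walk.isPath_def _).1 ((hR.takeUntil hl).dropUntil h), hnodup.2.1, ?_⟩
      intro y hy y' hy'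
      exact hnodup.2.2 y (Walk.support_dropUntil_subset _ h hy) y' hy'
    have heq : ((R.takeUntil l hl).dropUntil l' h).append (R.dropUntil l hl)
        = R.dropUntil l' hl' :=
      path_unique' hac _ _ hq (hR.dropUntil hl')
    rw [← heq, Walk.mem_support_append_iff]
    exact Or.inl (Walk.end_mem_support _)
  · right; exact h

end Aux

private lemma label_unique {X M : Type} {T : RootedTree X} {lam : Sym2 T.V → Option M}
    {eps : X → X → Option M} (hex : Explains T lam eps) {x z z' : X}
    (hz : z ≠ x) (hz' : z' ≠ x) {m m' : M}
    (h1 : eps z x = some m) (h2 : eps z' x = some m') : m = m' := by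
  have : DecidableEq T.V := Classical.decEq _
  obtain ⟨l, hlca, p, hp, e, hep, hem⟩ := ((hex z x hz).1 m).1 h1
  obtain ⟨l', hlca', p', hp', e', hep', hem'⟩ := ((hex z' x hz').1 m').1 h2
  have hac := T.isTree.IsAcyclic
  obtain ⟨w⟩ := T.isTree.isConnected.preconnected T.root (T.leaf x)
  obtain ⟨R, hR⟩ : ∃ R : T.G.Walk T.root (T.leaf x), R.IsPath := ⟨w.toPath.1, w.toPath.2⟩
  have hl : l ∈ R.support := hlca.1 (T.leaf x) (by simp) R hR
  have hl' : l' ∈ R.support := hlca'.1 (T.leaf x) (by simp) R hR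
  have hpR : p = R.dropUntil l hl := path_unique' hac _ _ hp (hR.dropUntil hl)
  have hp'R : p' = R.dropUntil l' hl' := path_unique' hac _ _ hp' (hR.dropUntil hl')
  rcases drop_comparable hac R hR hl hl' with hcase | hcase
  · have hsub : p.edges ⊆ p'.edges := by
      have hdd : R.dropUntil l hl = (R.dropUntil l' hl').dropUntil l hcase :=
        path_unique' hac _ _ (hR.dropUntil hl) ((hR.dropUntil hl').dropUntil hcase)
      rw [hpR, hp'R, hdd]
      exact SimpleGraph.Walk.edges_dropUntil_subset _ hcase
    have hpz : eps z' x = some m :=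
      ((hex z' x hz').1 m).2 ⟨l', hlca', p', hp', e, hsub hep, hem⟩
    exact Option.some.inj (hpz.symm.trans h2)
  · have hsub : p'.edges ⊆ p.edges := by
      have hdd : R.dropUntil l' hl' = (R.dropUntil l hl).dropUntil l' hcase :=
        path_unique' hac _ _ (hR.dropUntil hl') ((hR.dropUntil hl).dropUntil hcase)
      rw [hpR, hp'R, hdd]
      exact SimpleGraph.Walk.edges_dropUntil_subset _ hcase
    have hpz : eps z x = some m' :=
      ((hex z x hz).1 m').2 ⟨l, hlca, p, hp, e', hsub hep', hem'⟩
    exact Option.some.inj (h1.symm.trans hpz)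


theorem stmt2 {X M : Type} [Fintype X] [Fintype M] [Nonempty M]
    (hX : 1 < Fintype.card X)
    (eps : X → X → Option M)
    (hattain : ∀ m : M, ∃ x y : X, x ≠ y ∧ eps x y = some m)
    (htl : TreeLike eps) :
    (∀ s t : Option M, s ≠ t → Disjoint (Xset eps s) (Xset eps t)) ∧
    (⋃ s : Option M, Xset eps s) = Set.univ ∧
    (∀ m : M, (Xset eps (some m)).Nonempty) := by
  obtain ⟨T, lam, hphy, hex⟩ := htl
  refine ⟨?_, ?_, ?_⟩
  · intro s t hst
    rw [Set.disjoint_left]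
    rintro x ⟨z, hz, hezs, hallS⟩ ⟨w, hw, hewt, hallT⟩
    by_cases hzw : z = w
    · subst hzw
      exact hst (hezs.symm.trans hewt)
    · have h1 : s = none ∨ s = t := by
        rcases hallT z hzw hz with h | h
        · left; rw [← hezs, h]
        · right; rw [← hezs, h]
      have h2 : t = none ∨ t = s := by
        rcases hallS w (fun hh => hzw hh.symm) hw with h | h
        · left; rw [← hewt, h]
        · right; rw [← hewt, h]
      rcases h1 with h1 | h1
      · rcases h2 with h2 | h2
        · exact hst (h1.trans h2.symm)
        · exact hst h2.symm
      · exact hst h1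
  · ext x
    simp only [Set.mem_iUnion, Set.mem_univ, iff_true]
    by_cases h : ∃ z, z ≠ x ∧ ∃ m : M, eps z x = some m
    · obtain ⟨z, hzx, m, hm⟩ := h
      refine ⟨some m, z, hzx, hm, ?_⟩
      intro z' _ hz'x
      cases heq : eps z' x with
      | none => exact Or.inl rfl
      | some m' => exact Or.inr (congrArg some (label_unique hex hz'x hzx heq hm))
    · push_neg at h
      obtain ⟨z0, hz0⟩ := Fintype.exists_ne_of_one_lt_card hX x
      have hnone : ∀ z, z ≠ x → eps z x = none := by
        intro z hzx
        cases heq : eps z x with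
        | none => rfl
        | some m => exact absurd heq (h z hzx m)
      exact ⟨none, z0, hz0, hnone z0 hz0, fun z' _ hz'x => Or.inl (hnone z' hz'x)⟩
  · intro m
    obtain ⟨a, b, hab, hm⟩ := hattain m
    refine ⟨b, a, hab, hm, ?_⟩
    intro z' _ hz'b
    cases heq : eps z' b with
    | none => exact Or.inl rfl
    | some m' => exact Or.inr (congrArg some (label_unique hex hz'b hab heq hm))


end GenFitch
end

section
/- Let (T,λ) be an edge-labeled tree explaining ε and let e = uv be an inner edge of T with λ(e) = ⊗. Let T' be the (phylogenetic) tree obtained from T by contracting e, and let λ' be the labeling of T' inherited from λ on all remaining edges. Then (T',λ') explains ε. -/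
namespace GenFitch

open SimpleGraph

namespace RootedTree

variable {X : Type}

/-- The unique path between two vertices of a tree. -/
noncomputable def thePath (T : RootedTree X) (a b : T.V) : T.G.Walk a b :=
  (T.isTree.existsUnique_path a b).choose

lemma thePath_isPath (T : RootedTree X) (a b : T.V) : (T.thePath a b).IsPath :=
  (T.isTree.existsUnique_path a b).choose_spec.1

lemma path_unique (T : RootedTree X) {a b : T.V} {p : T.G.Walk a b} (hp : p.IsPath) :
    p = T.thePath a b :=
  (T.isTree.existsUnique_path a b).unique hp (T.thePath_isPath a b)

lemma anc_iff (T : RootedTree X) (a b : T.V) :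
    T.Anc a b ↔ a ∈ (T.thePath T.root b).support := by
  constructor
  · intro h; exact h _ (T.thePath_isPath _ _)
  · intro h p hp; rwa [T.path_unique hp]

lemma anc_refl (T : RootedTree X) (a : T.V) : T.Anc a a := by
  intro p _; exact p.end_mem_support

lemma anc_root (T : RootedTree X) (b : T.V) : T.Anc T.root b := by
  intro p _; exact p.start_mem_support

lemma anc_trans (T : RootedTree X) {a b c : T.V} (h1 : T.Anc a b) (h2 : T.Anc b c) :
    T.Anc a c := by
  classical
  rw [T.anc_iff] at h1 h2 ⊢
  have ht : ((T.thePath T.root c).takeUntil b h2).IsPath :=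
    (T.thePath_isPath _ _).takeUntil h2
  rw [← T.path_unique ht] at h1
  exact (T.thePath T.root c).support_takeUntil_subset h2 h1

lemma anc_antisymm (T : RootedTree X) {a b : T.V} (h1 : T.Anc a b) (h2 : T.Anc b a) :
    a = b := by
  classical
  rw [T.anc_iff] at h1 h2
  set p := T.thePath T.root b with hpdef
  have hpath : p.IsPath := T.thePath_isPath _ _
  have ht : (p.takeUntil a h1).IsPath := hpath.takeUntil h1
  rw [← T.path_unique ht] at h2
  by_contra hne
  have hnd : p.support.Nodup := hpath.support_nodup
  have hsp := p.take_spec h1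
  rw [← hsp, Walk.support_append, List.nodup_append] at hnd
  have hb2 : b ∈ (p.dropUntil a h1).support.tail := by
    have hb : b ∈ (p.dropUntil a h1).support := Walk.end_mem_support _
    rw [Walk.support_eq_cons (p.dropUntil a h1)] at hb
    rcases List.mem_cons.1 hb with h | h
    · exact absurd h.symm hne
    · exact h
  exact hnd.2.2 b h2 b hb2 rfl

lemma mem_edges_of_mem_support (T : RootedTree X) {s t a b : T.V} {p : T.G.Walk s t}
    (hp : p.IsPath) (hadj : T.G.Adj a b) (ha : a ∈ p.support) (hb : b ∈ p.support) :
    s(a, b) ∈ p.edges := by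
  classical
  have hb' := hb
  rw [← p.take_spec ha, Walk.mem_support_append_iff] at hb'
  have hedges : p.edges = (p.takeUntil a ha).edges ++ (p.dropUntil a ha).edges := by
    conv_lhs => rw [← p.take_spec ha]
    exact Walk.edges_append _ _
  rcases hb' with hbt | hbd
  · -- b on the segment before a : single edge path b → a
    have hq : ((p.takeUntil a ha).dropUntil b hbt).IsPath := (hp.takeUntil ha).dropUntil hbt
    have hone : (Walk.cons hadj.symm Walk.nil : T.G.Walk b a).IsPath := by
      simp [Walk.cons_isPath_iff, hadj.ne']
    have : (p.takeUntil a ha).dropUntil b hbt = Walk.cons hadj.symm Walk.nil := by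
      rw [T.path_unique hq, T.path_unique hone]
    have hmem : s(b, a) ∈ ((p.takeUntil a ha).dropUntil b hbt).edges := by
      rw [this]; simp
    have hmem2 : s(b, a) ∈ (p.takeUntil a ha).edges :=
      (p.takeUntil a ha).edges_dropUntil_subset hbt hmem
    rw [hedges, Sym2.eq_swap]
    exact List.mem_append_left _ hmem2
  · have hq : ((p.dropUntil a ha).takeUntil b hbd).IsPath := (hp.dropUntil ha).takeUntil hbd
    have hone : (Walk.cons hadj Walk.nil : T.G.Walk a b).IsPath := by
      simp [Walk.cons_isPath_iff, hadj.ne]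
    have : (p.dropUntil a ha).takeUntil b hbd = Walk.cons hadj Walk.nil := by
      rw [T.path_unique hq, T.path_unique hone]
    have hmem : s(a, b) ∈ ((p.dropUntil a ha).takeUntil b hbd).edges := by
      rw [this]; simp
    have hmem2 : s(a, b) ∈ (p.dropUntil a ha).edges :=
      (p.dropUntil a ha).edges_takeUntil_subset hbd hmem
    rw [hedges]
    exact List.mem_append_right _ hmem2

lemma adj_anc (T : RootedTree X) {a b : T.V} (h : T.G.Adj a b) :
    T.Anc a b ∨ T.Anc b a := by
  by_cases hb : b ∈ (T.thePath T.root a).support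
  · exact Or.inr ((T.anc_iff b a).2 hb)
  · left
    have hpath : ((T.thePath T.root a).concat h).IsPath := by
      rw [Walk.concat_eq_append, Walk.isPath_def, Walk.support_append]
      simp only [Walk.support_cons, Walk.support_nil, List.tail_cons]
      rw [List.nodup_append]
      refine ⟨(T.thePath_isPath _ _).support_nodup, List.nodup_singleton _, ?_⟩
      intro x hx y hx' hxy
      rw [List.mem_singleton] at hx'
      subst hx'
      exact hb (hxy ▸ hx)
    rw [T.anc_iff, ← T.path_unique hpath, Walk.concat_eq_append,
      Walk.mem_support_append_iff]
    exact Or.inl (Walk.end_mem_support _)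

lemma anc_comp (T : RootedTree X) {b a d : T.V} {p : T.G.Walk T.root b} (hp : p.IsPath)
    (ha : a ∈ p.support) (hd : d ∈ p.support) : T.Anc a d ∨ T.Anc d a := by
  classical
  rw [← p.take_spec ha, Walk.mem_support_append_iff] at hd
  rcases hd with hd | hd
  · right
    rw [T.anc_iff, ← T.path_unique (hp.takeUntil ha)]
    exact hd
  · left
    have hnd : ((p.takeUntil a ha).support ++ (p.dropUntil a ha).support.tail).Nodup := by
      rw [← Walk.support_append, p.take_spec ha]
      exact hp.support_nodup
    rw [List.nodup_append] at hnd
    have hsubtail : ((p.dropUntil a ha).takeUntil d hd).support.tail ⊆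
        (p.dropUntil a ha).support.tail := by
      have key : (p.dropUntil a ha).support.tail =
          ((p.dropUntil a ha).takeUntil d hd).support.tail ++
            ((p.dropUntil a ha).dropUntil d hd).support.tail := by
        conv_lhs => rw [← (p.dropUntil a ha).take_spec hd]
        exact Walk.tail_support_append _ _
      rw [key]
      exact List.subset_append_left _ _
    have hw : ((p.takeUntil a ha).append ((p.dropUntil a ha).takeUntil d hd)).IsPath := by
      rw [Walk.isPath_def, Walk.support_append, List.nodup_append]
      refine ⟨(hp.takeUntil ha).support_nodup, ?_, ?_⟩
      · have := ((hp.dropUntil ha).takeUntil hd).support_nodup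
        rw [Walk.support_eq_cons] at this
        exact this.of_cons
      · intro x hx y hx' hxy
        exact hnd.2.2 x hx y (hsubtail hx') hxy
    rw [T.anc_iff, ← T.path_unique hw, Walk.mem_support_append_iff]
    exact Or.inl (Walk.end_mem_support _)

lemma chain_max (T : RootedTree X) : ∀ (L : List T.V), L ≠ [] →
    (∀ a ∈ L, ∀ b ∈ L, T.Anc a b ∨ T.Anc b a) → ∃ l ∈ L, ∀ d ∈ L, T.Anc d l := by
  intro L
  induction L with
  | nil => intro h; exact absurd rfl h
  | cons a L ih =>
    intro _ hcomp
    rcases List.eq_nil_or_concat' L with rfl | hL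
    · refine ⟨a, List.mem_cons_self, ?_⟩
      intro d hd
      rw [List.mem_singleton] at hd
      subst hd
      exact T.anc_refl _
    · have hLne : L ≠ [] := by rcases hL with ⟨l', a', rfl⟩; simp
      obtain ⟨l, hl, hall⟩ := ih hLne (fun x hx y hy =>
        hcomp x (List.mem_cons_of_mem _ hx) y (List.mem_cons_of_mem _ hy))
      rcases hcomp a (List.mem_cons_self) l (List.mem_cons_of_mem _ hl) with h | h
      · exact ⟨l, List.mem_cons_of_mem _ hl, by
          intro d hd
          rcases List.mem_cons.1 hd with rfl | hd
          · exact h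
          · exact hall d hd⟩
      · exact ⟨a, List.mem_cons_self, by
          intro d hd
          rcases List.mem_cons.1 hd with rfl | hd
          · exact T.anc_refl d
          · exact T.anc_trans (hall d hd) h⟩

lemma exists_lca (T : RootedTree X) (a b : T.V) : ∃ l, T.IsLcaSet l {a, b} := by
  classical
  set p := T.thePath T.root a with hpdef
  set L := p.support.filter (fun d => decide (T.Anc d a ∧ T.Anc d b)) with hLdef
  have hmemL : ∀ d : T.V, d ∈ L ↔ d ∈ p.support ∧ T.Anc d a ∧ T.Anc d b := by
    intro d
    simp [hLdef, List.mem_filter]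
  have hLne : L ≠ [] := by
    have : T.root ∈ L := (hmemL _).2 ⟨p.start_mem_support, T.anc_root a, T.anc_root b⟩
    exact List.ne_nil_of_mem this
  obtain ⟨l, hl, hall⟩ := T.chain_max L hLne (by
    intro x hx y hy
    exact T.anc_comp (T.thePath_isPath _ _) ((hmemL x).1 hx).1 ((hmemL y).1 hy).1)
  obtain ⟨-, hla, hlb⟩ := (hmemL l).1 hl
  refine ⟨l, ?_, ?_⟩
  · intro v hv
    rcases hv with rfl | hv
    · exact hla
    · rw [Set.mem_singleton_iff] at hv; subst hv; exact hlb
  · intro w hw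
    have hwa : T.Anc w a := hw a (Set.mem_insert _ _)
    have hwb : T.Anc w b := hw b (Set.mem_insert_of_mem _ rfl)
    have : w ∈ L := (hmemL w).2 ⟨(T.anc_iff w a).1 hwa, hwa, hwb⟩
    exact hall w this

lemma lca_unique (T : RootedTree X) {l l' : T.V} {S : Set T.V}
    (h : T.IsLcaSet l S) (h' : T.IsLcaSet l' S) : l = l' :=
  T.anc_antisymm (h'.2 l h.1) (h.2 l' h'.1)

end RootedTree

section MapWalk

variable {X : Type} {T T' : RootedTree X}

open Classical in
/-- Push a walk of `T` forward along a contraction map. -/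
noncomputable def mapWalk (phi : T.V → T'.V)
    (hadj : ∀ a b : T.V, T.G.Adj a b → phi a = phi b ∨ T'.G.Adj (phi a) (phi b)) :
    ∀ {a b : T.V}, T.G.Walk a b → T'.G.Walk (phi a) (phi b)
  | _, _, Walk.nil => Walk.nil
  | _, _, Walk.cons (v := c) h p =>
    if hc : phi _ = phi c then (mapWalk phi hadj p).copy hc.symm rfl
    else Walk.cons ((hadj _ _ h).resolve_left hc) (mapWalk phi hadj p)

variable (phi : T.V → T'.V)
  (hadj : ∀ a b : T.V, T.G.Adj a b → phi a = phi b ∨ T'.G.Adj (phi a) (phi b))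

lemma mem_support_mapWalk {a b : T.V} (p : T.G.Walk a b) (w : T'.V) :
    w ∈ (mapWalk phi hadj p).support ↔ ∃ c ∈ p.support, phi c = w := by
  induction p with
  | nil => simp [mapWalk, eq_comm]
  | cons h p ih =>
    rename_i x y z
    rw [mapWalk]
    split
    · rename_i hc
      rw [Walk.support_copy, ih]
      simp only [Walk.support_cons, List.mem_cons]
      constructor
      · rintro ⟨c, hc', rfl⟩; exact ⟨c, Or.inr hc', rfl⟩
      · rintro ⟨c, hc', rfl⟩
        rcases hc' with rfl | hc'
        · exact ⟨y, p.start_mem_support, hc.symm⟩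
        · exact ⟨c, hc', rfl⟩
    · rename_i hc
      simp only [Walk.support_cons, List.mem_cons, ih]
      constructor
      · rintro (rfl | ⟨c, hc', rfl⟩)
        · exact ⟨x, Or.inl rfl, rfl⟩
        · exact ⟨c, Or.inr hc', rfl⟩
      · rintro ⟨c, hc', rfl⟩
        rcases hc' with rfl | hc'
        · exact Or.inl rfl
        · exact Or.inr ⟨c, hc', rfl⟩

lemma mem_edges_mapWalk {a b : T.V} (p : T.G.Walk a b) (e : Sym2 T'.V) :
    e ∈ (mapWalk phi hadj p).edges ↔
      ∃ c d : T.V, s(c, d) ∈ p.edges ∧ phi c ≠ phi d ∧ e = s(phi c, phi d) := by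
  induction p with
  | nil => simp [mapWalk]
  | cons h p ih =>
    rename_i x y z
    rw [mapWalk]
    split
    · rename_i hc
      rw [Walk.edges_copy, ih]
      simp only [Walk.edges_cons, List.mem_cons]
      constructor
      · rintro ⟨c, d, hcd, hne, rfl⟩; exact ⟨c, d, Or.inr hcd, hne, rfl⟩
      · rintro ⟨c, d, hcd, hne, rfl⟩
        rcases hcd with heq | hcd
        · exfalso
          rcases Sym2.eq_iff.1 heq with ⟨rfl, rfl⟩ | ⟨rfl, rfl⟩
          · exact hne hc
          · exact hne hc.symm
        · exact ⟨c, d, hcd, hne, rfl⟩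
    · rename_i hc
      simp only [Walk.edges_cons, List.mem_cons, ih]
      constructor
      · rintro (rfl | ⟨c, d, hcd, hne, rfl⟩)
        · exact ⟨x, y, Or.inl rfl, hc, rfl⟩
        · exact ⟨c, d, Or.inr hcd, hne, rfl⟩
      · rintro ⟨c, d, hcd, hne, rfl⟩
        rcases hcd with heq | hcd
        · rcases Sym2.eq_iff.1 heq with ⟨rfl, rfl⟩ | ⟨rfl, rfl⟩
          · exact Or.inl rfl
          · exact Or.inl Sym2.eq_swap
        · exact Or.inr ⟨c, d, hcd, hne, rfl⟩

lemma isPath_mapWalk (u v : T.V) (huv : T.G.Adj u v) (hmerge : phi u = phi v)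
    (hfib : ∀ a b : T.V, phi a = phi b → a = b ∨ (a = u ∧ b = v) ∨ (a = v ∧ b = u))
    {a b : T.V} {p : T.G.Walk a b} (hp : p.IsPath) : (mapWalk phi hadj p).IsPath := by
  induction p with
  | nil => simp [mapWalk]
  | cons h p ih =>
    rename_i x y z
    have hxs : x ∉ p.support := ((Walk.cons_isPath_iff h p).1 hp).2
    have hp' : p.IsPath := hp.of_cons
    rw [mapWalk]
    split
    · rename_i hc
      rw [Walk.isPath_copy]
      exact ih hp'
    · rename_i hc
      rw [Walk.cons_isPath_iff]
      refine ⟨ih hp', ?_⟩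
      intro hmem
      rw [mem_support_mapWalk] at hmem
      obtain ⟨d, hd, hphid⟩ := hmem
      have hdx : d ≠ x := fun hh => hxs (hh ▸ hd)
      have hedge : s(u, v) ∈ (Walk.cons h p).edges := by
        rcases hfib x d hphid.symm with rfl | ⟨rfl, rfl⟩ | ⟨rfl, rfl⟩
        · exact absurd rfl hdx
        · exact T.mem_edges_of_mem_support hp huv (Walk.start_mem_support _)
            (by rw [Walk.support_cons]; exact List.mem_cons_of_mem _ hd)
        · exact T.mem_edges_of_mem_support hp huv
            (by rw [Walk.support_cons]; exact List.mem_cons_of_mem _ hd)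
            (Walk.start_mem_support _)
      rw [Walk.edges_cons, List.mem_cons] at hedge
      rcases hedge with heq | hedge
      · rcases hfib x d hphid.symm with rfl | ⟨rfl, rfl⟩ | ⟨rfl, rfl⟩
        · exact hdx rfl
        · rcases Sym2.eq_iff.1 heq with ⟨-, h2⟩ | ⟨-, h2⟩
          · exact hc (h2 ▸ hmerge)
          · exact hdx h2
        · rcases Sym2.eq_iff.1 heq with ⟨h2, -⟩ | ⟨h2, -⟩
          · exact hdx h2
          · exact hc (h2 ▸ hmerge).symm
      · rcases hfib x d hphid.symm with rfl | ⟨rfl, rfl⟩ | ⟨rfl, rfl⟩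
        · exact hdx rfl
        · exact hxs (p.fst_mem_support_of_mem_edges hedge)
        · exact hxs (p.snd_mem_support_of_mem_edges hedge)

end MapWalk

theorem stmt9 {X M : Type} [Fintype X] [Fintype M] [Nonempty M]
    (hX : 1 < Fintype.card X)
    (eps : X → X → Option M)
    (T T' : RootedTree X)
    (lam : Sym2 T.V → Option M) (lam' : Sym2 T'.V → Option M)
    (hphylo : T.Phylo) (hexp : Explains T lam eps)
    (u v : T.V) (huv : T.G.Adj u v)
    (hu : ¬ T.IsLeaf u) (hv : ¬ T.IsLeaf v)
    (hlab : lam s(u, v) = none)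
    (φ : T.V → T'.V) (hphylo' : T'.Phylo)
    (hcon : IsContractionMap T T' φ)
    (hmerge : φ u = φ v)
    (hfib : ∀ a b : T.V, φ a = φ b → a = b ∨ (a = u ∧ b = v) ∨ (a = v ∧ b = u))
    (hlam' : ∀ a b : T.V, T.G.Adj a b → φ a ≠ φ b →
        lam' s(φ a, φ b) = lam s(a, b)) :
    Explains T' lam' eps := by
  classical
  have hroot : φ T.root = T'.root := hcon.root_map
  have hleaf : ∀ x, φ (T.leaf x) = T'.leaf x := hcon.leaf_map
  have hPath : ∀ {a b : T.V} {p : T.G.Walk a b}, p.IsPath →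
      (mapWalk φ hcon.adj_map p).IsPath :=
    fun hp => isPath_mapWalk φ hcon.adj_map u v huv hmerge hfib hp
  have hanc : ∀ (w : T'.V) (b : T.V), T'.Anc w (φ b) ↔ ∃ a, T.Anc a b ∧ φ a = w := by
    intro w b
    have hq : ((mapWalk φ hcon.adj_map (T.thePath T.root b)).copy hroot rfl).IsPath := by
      rw [Walk.isPath_copy]; exact hPath (T.thePath_isPath _ _)
    rw [T'.anc_iff, ← T'.path_unique hq, Walk.support_copy, mem_support_mapWalk]
    constructor
    · rintro ⟨c, hc, rfl⟩; exact ⟨c, (T.anc_iff _ _).2 hc, rfl⟩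
    · rintro ⟨c, hc, rfl⟩; exact ⟨c, (T.anc_iff _ _).1 hc, rfl⟩
  have hancF : ∀ a b : T.V, T.Anc a b → T'.Anc (φ a) (φ b) :=
    fun a b h => (hanc _ _).2 ⟨a, h, rfl⟩
  have horder : T.Anc u v ∨ T.Anc v u := T.adj_anc huv
  have hlca : ∀ (l : T.V) (x y : X), T.IsLcaSet l {T.leaf x, T.leaf y} →
      T'.IsLcaSet (φ l) {T'.leaf x, T'.leaf y} := by
    intro l x y hl
    have hlx : T.Anc l (T.leaf x) := hl.1 _ (Set.mem_insert _ _)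
    have hly : T.Anc l (T.leaf y) := hl.1 _ (Set.mem_insert_of_mem _ rfl)
    have hcom : ∀ c : T.V, T.Anc c (T.leaf x) → T.Anc c (T.leaf y) → T.Anc c l := by
      intro c h1 h2
      refine hl.2 c ?_
      intro z hz
      simp only [Set.mem_insert_iff, Set.mem_singleton_iff] at hz
      rcases hz with rfl | rfl
      · exact h1
      · exact h2
    constructor
    · intro w hw
      simp only [Set.mem_insert_iff, Set.mem_singleton_iff] at hw
      rcases hw with rfl | rfl
      · rw [← hleaf x]; exact hancF _ _ hlx
      · rw [← hleaf y]; exact hancF _ _ hly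
    · intro w hw
      have hwx : T'.Anc w (φ (T.leaf x)) := by
        rw [hleaf x]; exact hw _ (Set.mem_insert _ _)
      have hwy : T'.Anc w (φ (T.leaf y)) := by
        rw [hleaf y]; exact hw _ (Set.mem_insert_of_mem _ rfl)
      obtain ⟨a, ha, rfl⟩ := (hanc _ _).1 hwx
      obtain ⟨b, hb, hba⟩ := (hanc _ _).1 hwy
      by_cases hab : b = a
      · subst hab
        exact hancF _ _ (hcom b ha hb)
      · rcases hfib b a hba with h | ⟨rfl, rfl⟩ | ⟨rfl, rfl⟩
        · exact absurd h hab
        · rcases horder with h | h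
          · have := hancF _ _ (hcom _ (T.anc_trans h ha) hb)
            rwa [hmerge] at this
          · exact hancF _ _ (hcom _ ha (T.anc_trans h hb))
        · rcases horder with h | h
          · exact hancF _ _ (hcom _ ha (T.anc_trans h hb))
          · have := hancF _ _ (hcom _ (T.anc_trans h ha) hb)
            rwa [← hmerge] at this
  have hPHL : ∀ (x y : X) (m : M), PathHasLabel T lam x y m ↔ PathHasLabel T' lam' x y m := by
    intro x y m
    constructor
    · rintro ⟨l, hl, p, hp, e, he, hle⟩
      induction e using Sym2.ind with
      | _ c d =>
      have hcd : T.G.Adj c d := p.adj_of_mem_edges he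
      have hne : φ c ≠ φ d := by
        intro heq
        rcases hfib c d heq with rfl | ⟨rfl, rfl⟩ | ⟨rfl, rfl⟩
        · exact hcd.ne rfl
        · rw [hlab] at hle; cases hle
        · rw [Sym2.eq_swap, hlab] at hle; cases hle
      refine ⟨φ l, hlca l x y hl,
        (mapWalk φ hcon.adj_map p).copy rfl (hleaf y),
        by rw [Walk.isPath_copy]; exact hPath hp, s(φ c, φ d), ?_, ?_⟩
      · rw [Walk.edges_copy]
        exact (mem_edges_mapWalk _ _ p _).2 ⟨c, d, he, hne, rfl⟩
      · rw [hlam' c d hcd hne]; exact hle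
    · rintro ⟨l', hl', p', hp', e', he', hle'⟩
      obtain ⟨l, hl⟩ := T.exists_lca (T.leaf x) (T.leaf y)
      have hphil : φ l = l' := T'.lca_unique (hlca l x y hl) hl'
      subst hphil
      have hq : ((mapWalk φ hcon.adj_map (T.thePath l (T.leaf y))).copy rfl
          (hleaf y)).IsPath := by
        rw [Walk.isPath_copy]; exact hPath (T.thePath_isPath _ _)
      have hpq : p' = (mapWalk φ hcon.adj_map (T.thePath l (T.leaf y))).copy rfl
          (hleaf y) := by
        rw [T'.path_unique hp', T'.path_unique hq]
      rw [hpq, Walk.edges_copy, mem_edges_mapWalk] at he'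
      obtain ⟨c, d, hcd, hne, rfl⟩ := he'
      have hadjcd : T.G.Adj c d := (T.thePath l (T.leaf y)).adj_of_mem_edges hcd
      refine ⟨l, hl, T.thePath l (T.leaf y), T.thePath_isPath _ _, s(c, d), hcd, ?_⟩
      rw [← hlam' c d hadjcd hne]; exact hle'
  intro x y hxy
  obtain ⟨h1, h2⟩ := hexp x y hxy
  constructor
  · intro m; rw [← hPHL x y m]; exact h1 m
  · rw [h2]
    constructor
    · intro h m hm; exact h m ((hPHL x y m).2 hm)
    · intro h m hm; exact h m ((hPHL x y m).1 hm)

end GenFitch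
end
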